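/- For the E(2) Kähler–Einstein ODE system, the function c² - a² - 2a²b² satisfies (c² - a² - 2a²b²)' = -(c² - a²)(c² + a²) - 2a²b²c². In particular, if c² - a² - 2a²b² > 0 at some time, then c² - a² - 2a²b² > 0 at all earlier times in the solution interval where a, b, c > 0. -/

import Mathlib

/-- For the E(2) Kähler–Einstein ODE system,
(c²-a²-2a²b²)' = -(c²-a²)(c²+a²) - 2a²b²c², and positivity of c²-a²-2a²b² propagates
backwards in time. -/
theorem stmt_5 (a b c : ℝ → ℝ) (ξ η : ℝ) (I : Set ℝ) (hI : I = Set.Ioo ξ η)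
    (hpos : ∀ t ∈ I, 0 < a t ∧ 0 < b t ∧ 0 < c t)
    (ha : ∀ t ∈ I, HasDerivAt a (a t / 2 * (-(a t) ^ 2 + (c t) ^ 2)) t)
    (hb : ∀ t ∈ I, HasDerivAt b (b t / 2 * ((a t) ^ 2 + (c t) ^ 2)) t)
    (hc : ∀ t ∈ I, HasDerivAt c (c t / 2 * ((a t) ^ 2 - (c t) ^ 2 + 2 * (a t) ^ 2 * (b t) ^ 2)) t) :
    (∀ t ∈ I, HasDerivAt (fun s => (c s) ^ 2 - (a s) ^ 2 - 2 * (a s) ^ 2 * (b s) ^ 2)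
      (-((c t) ^ 2 - (a t) ^ 2) * ((c t) ^ 2 + (a t) ^ 2) - 2 * (a t) ^ 2 * (b t) ^ 2 * (c t) ^ 2) t) ∧
    (∀ t₁ ∈ I, 0 < (c t₁) ^ 2 - (a t₁) ^ 2 - 2 * (a t₁) ^ 2 * (b t₁) ^ 2 →
      ∀ t ∈ I, t ≤ t₁ → 0 < (c t) ^ 2 - (a t) ^ 2 - 2 * (a t) ^ 2 * (b t) ^ 2) := by
  have hIopen : IsOpen I := by rw [hI]; exact isOpen_Ioo
  set F : ℝ → ℝ := fun s => (c s) ^ 2 - (a s) ^ 2 - 2 * (a s) ^ 2 * (b s) ^ 2 with hFdef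
  have hF : ∀ t ∈ I, HasDerivAt F
      (-((c t) ^ 2 - (a t) ^ 2) * ((c t) ^ 2 + (a t) ^ 2) - 2 * (a t) ^ 2 * (b t) ^ 2 * (c t) ^ 2)
      t := by
    intro t ht
    have hc2 := (hc t ht).pow 2
    have ha2 := (ha t ht).pow 2
    have hb2 := (hb t ht).pow 2
    have h := (hc2.sub ha2).sub ((ha2.const_mul 2).mul hb2)
    refine h.congr_deriv ?_
    simp only [Pi.pow_apply]
    ring
  refine ⟨hF, ?_⟩
  intro t₁ ht₁ hF1 t₀ ht₀ hle
  -- continuous functions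
  have hconta : ContinuousOn a I := fun s hs => (ha s hs).continuousAt.continuousWithinAt
  have hcontc : ContinuousOn c I := fun s hs => (hc s hs).continuousAt.continuousWithinAt
  set g : ℝ → ℝ := fun s => (c s) ^ 2 + (a s) ^ 2 with hgdef
  have hcontg : ContinuousOn g I := ((hcontc.pow 2).add (hconta.pow 2))
  have hsub : Set.Icc t₀ t₁ ⊆ I := by
    rw [hI] at ht₀ ht₁ ⊢
    exact Set.Icc_subset_Ioo ht₀.1 ht₁.2
  set G : ℝ → ℝ := fun s => ∫ u in t₀..s, g u with hGdef
  have hG : ∀ s ∈ I, HasDerivAt G (g s) s := by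
    intro s hs
    refine intervalIntegral.integral_hasDerivAt_right ?_ ?_ ?_
    · refine (hcontg.mono ?_).intervalIntegrable
      have : I.OrdConnected := by rw [hI]; exact Set.ordConnected_Ioo
      exact this.uIcc_subset ht₀ hs
    · exact hcontg.stronglyMeasurableAtFilter hIopen s hs
    · exact hcontg.continuousAt (hIopen.mem_nhds hs)
  set H : ℝ → ℝ := fun s => F s * Real.exp (G s) with hHdef
  have hH : ∀ s ∈ I, HasDerivAt H
      ((-2 * (a s) ^ 2 * (b s) ^ 2 * (2 * (c s) ^ 2 + (a s) ^ 2)) * Real.exp (G s)) s := by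
    intro s hs
    have h := (hF s hs).mul ((hG s hs).exp)
    refine h.congr_deriv ?_
    ring
  have hanti : AntitoneOn H (Set.Icc t₀ t₁) := by
    refine antitoneOn_of_deriv_nonpos (convex_Icc _ _) ?_ ?_ ?_
    · exact fun s hs => ((hH s (hsub hs)).continuousAt).continuousWithinAt
    · intro s hs
      exact ((hH s (hsub (interior_subset hs))).differentiableAt).differentiableWithinAt
    · intro s hs
      have hs' := hsub (interior_subset hs)
      rw [(hH s hs').deriv]
      have ha0 := (hpos s hs').1
      have hb0 := (hpos s hs').2.1
      have hc0 := (hpos s hs').2.2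
      have := Real.exp_pos (G s)
      have hnn : 0 ≤ 2 * a s ^ 2 * b s ^ 2 * (2 * c s ^ 2 + a s ^ 2) * Real.exp (G s) := by
        positivity
      linarith
  have h1 : H t₀ ≥ H t₁ := hanti (Set.left_mem_Icc.mpr hle) (Set.right_mem_Icc.mpr hle) hle
  have h2 : 0 < H t₁ := mul_pos hF1 (Real.exp_pos _)
  have h3 : 0 < F t₀ * Real.exp (G t₀) := lt_of_lt_of_le h2 h1
  have he := Real.exp_pos (G t₀)
  show 0 < F t₀
  by_contra hcon
  push_neg at hcon
  nlinarith
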